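/- arXiv:math-ph/0204032 — 2 statements merged into one kernel-verified Lean document; each statement's English description precedes it below -/
import Mathlib

section
/- Suppose ŵ : ℝ^d × ℝ^d → ℝ is continuous, ŵ(0,0) = 1, and along every solution (k_s, η_s) of k̇ = ω₀²η_s, η̇ = 2γη_s - k_s one has ŵ(k_s,η_s) = ŵ(k₀,η₀) exp(-∫₀^s ϑ_τ dτ) with ϑ_τ := D_pp|η_τ|² + D_qq|k_τ|² + 2D_pq k_τ·η_τ ≥ 0 not identically zero along nontrivial trajectories. If γ = 0 and ω₀ > 0 (so trajectories are periodic with period 2π/ω₀) and D_pp, D_qq > 0, then ŵ ≡ 0 on ℝ^{2d} \ {0}, contradicting integrability of a nontrivial steady state; i.e., evaluating at one period gives ŵ(k₀,η₀) = ŵ(k₀,η₀) exp(-(π/ω₀³)(D_pp + ω₀²D_qq)(|k₀|² + ω₀²|η₀|²)), which forces ŵ(k₀,η₀) = 0 for all (k₀,η₀) ≠ (0,0). -/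
open Real MeasureTheory

/-- Frictionless case `γ = 0`, `ω₀ > 0`: if `ŵ` decays along the (periodic)
characteristics of the stationary Fourier-transformed QFP equation with
dissipation rate `ϑ`, then integrating over one period gives
`ŵ(k₀,η₀) = ŵ(k₀,η₀) exp(-(π/ω₀³)(D_pp + ω₀²D_qq)(|k₀|² + ω₀²|η₀|²))`,
which forces `ŵ ≡ 0` away from the origin: no nontrivial steady state. -/
theorem stmt_12 (d : ℕ) (ω₀ Dpp Dqq Dpq : ℝ)
    (hω₀ : 0 < ω₀) (hpp : 0 < Dpp) (hqq : 0 < Dqq) (hpq : 0 ≤ Dpq)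
    (hL : Dpq ^ 2 ≤ Dpp * Dqq)
    (what : EuclideanSpace ℝ (Fin d) × EuclideanSpace ℝ (Fin d) → ℝ)
    (hcont : Continuous what) (hnorm : what 0 = 1)
    (hchar : ∀ (k₀ η₀ : EuclideanSpace ℝ (Fin d)) (s : ℝ),
      ∀ k η : ℝ → EuclideanSpace ℝ (Fin d),
        (k = fun τ => Real.cos (ω₀ * τ) • k₀ + (ω₀ * Real.sin (ω₀ * τ)) • η₀) →
        (η = fun τ => Real.cos (ω₀ * τ) • η₀ - (Real.sin (ω₀ * τ) / ω₀) • k₀) →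
        what (k s, η s) = what (k₀, η₀) *
          Real.exp (-∫ τ in (0 : ℝ)..s,
            (Dpp * ‖η τ‖ ^ 2 + Dqq * ‖k τ‖ ^ 2 + 2 * Dpq * (inner ℝ (k τ) (η τ) : ℝ)))) :
    ∀ k₀ η₀ : EuclideanSpace ℝ (Fin d),
      what (k₀, η₀) = what (k₀, η₀) *
        Real.exp (-(Real.pi / ω₀ ^ 3) * (Dpp + ω₀ ^ 2 * Dqq)
          * (‖k₀‖ ^ 2 + ω₀ ^ 2 * ‖η₀‖ ^ 2)) ∧
      ((k₀, η₀) ≠ (0 : EuclideanSpace ℝ (Fin d) × EuclideanSpace ℝ (Fin d)) →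
        what (k₀, η₀) = 0) := by
  intro k₀ η₀
  have hω' : ω₀ ≠ 0 := ne_of_gt hω₀
  set a : ℝ := ‖k₀‖ ^ 2 with ha
  set b : ℝ := ‖η₀‖ ^ 2 with hb
  set c : ℝ := (inner ℝ k₀ η₀ : ℝ) with hc
  set k : ℝ → EuclideanSpace ℝ (Fin d) :=
    fun τ => Real.cos (ω₀ * τ) • k₀ + (ω₀ * Real.sin (ω₀ * τ)) • η₀ with hk
  set η : ℝ → EuclideanSpace ℝ (Fin d) :=
    fun τ => Real.cos (ω₀ * τ) • η₀ - (Real.sin (ω₀ * τ) / ω₀) • k₀ with hη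
  set T : ℝ := 2 * Real.pi / ω₀ with hT
  have hωT : ω₀ * T = 2 * Real.pi := by rw [hT]; field_simp
  have hkT : k T = k₀ := by
    simp [hk, hωT, Real.cos_two_pi, Real.sin_two_pi]
  have hηT : η T = η₀ := by
    simp [hη, hωT, Real.cos_two_pi, Real.sin_two_pi]
  -- pointwise identity for the integrand
  set P : ℝ := Dpp * b + Dqq * a + 2 * Dpq * c with hP
  set Q : ℝ := Dpp * (a / ω₀ ^ 2) + Dqq * (ω₀ ^ 2 * b) - 2 * Dpq * c with hQ
  set R : ℝ := Dpp * (-2 / ω₀ * c) + Dqq * (2 * ω₀ * c)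
      + 2 * Dpq * (ω₀ * b - a / ω₀) with hR
  have key : ∀ τ : ℝ,
      Dpp * ‖η τ‖ ^ 2 + Dqq * ‖k τ‖ ^ 2 + 2 * Dpq * (inner ℝ (k τ) (η τ) : ℝ)
      = P * Real.cos (ω₀ * τ) ^ 2 + Q * Real.sin (ω₀ * τ) ^ 2
        + R * (Real.sin (ω₀ * τ) * Real.cos (ω₀ * τ)) := by
    intro τ
    have hknorm : ‖k τ‖ ^ 2 = Real.cos (ω₀ * τ) ^ 2 * a
        + (ω₀ * Real.sin (ω₀ * τ)) ^ 2 * b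
        + 2 * (Real.cos (ω₀ * τ) * (ω₀ * Real.sin (ω₀ * τ))) * c := by
      rw [hk]
      simp only
      rw [norm_add_sq_real, norm_smul, norm_smul, real_inner_smul_left,
        real_inner_smul_right]
      simp only [Real.norm_eq_abs, mul_pow, sq_abs, ← ha, ← hb, ← hc]
      ring
    have hηnorm : ‖η τ‖ ^ 2 = Real.cos (ω₀ * τ) ^ 2 * b
        + (Real.sin (ω₀ * τ) / ω₀) ^ 2 * a
        - 2 * (Real.cos (ω₀ * τ) * (Real.sin (ω₀ * τ) / ω₀)) * c := by
      rw [hη]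
      simp only
      rw [norm_sub_sq_real, norm_smul, norm_smul, real_inner_smul_left,
        real_inner_smul_right, real_inner_comm k₀ η₀]
      simp only [Real.norm_eq_abs, mul_pow, sq_abs, ← ha, ← hb, ← hc]
      ring
    have hinner : (inner ℝ (k τ) (η τ) : ℝ)
        = (Real.cos (ω₀ * τ) ^ 2 - Real.sin (ω₀ * τ) ^ 2) * c
          + Real.sin (ω₀ * τ) * Real.cos (ω₀ * τ) * (ω₀ * b - a / ω₀) := by
      rw [hk, hη]
      simp only [inner_add_left, inner_sub_right, real_inner_smul_left,
        real_inner_smul_right, real_inner_self_eq_norm_sq, real_inner_comm k₀ η₀]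
      simp only [← ha, ← hb, ← hc]
      field_simp
      ring
    rw [hknorm, hηnorm, hinner, hP, hQ, hR]
    field_simp
    ring
  -- compute the integral
  have hIc : ∫ τ in (0:ℝ)..T, Real.cos (ω₀ * τ) ^ 2 = Real.pi / ω₀ := by
    rw [intervalIntegral.integral_comp_mul_left (fun u => Real.cos u ^ 2) hω']
    rw [mul_zero, hωT, integral_cos_sq]
    simp [Real.sin_two_pi, Real.cos_two_pi]
    ring
  have hIs : ∫ τ in (0:ℝ)..T, Real.sin (ω₀ * τ) ^ 2 = Real.pi / ω₀ := by
    rw [intervalIntegral.integral_comp_mul_left (fun u => Real.sin u ^ 2) hω']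
    rw [mul_zero, hωT, integral_sin_sq]
    simp [Real.sin_two_pi, Real.cos_two_pi]
    ring
  have hIsc : ∫ τ in (0:ℝ)..T, Real.sin (ω₀ * τ) * Real.cos (ω₀ * τ) = 0 := by
    rw [intervalIntegral.integral_comp_mul_left (fun u => Real.sin u * Real.cos u) hω']
    rw [mul_zero, hωT, integral_sin_mul_cos₁]
    simp [Real.sin_two_pi]
  have hint : ∫ τ in (0:ℝ)..T,
      (Dpp * ‖η τ‖ ^ 2 + Dqq * ‖k τ‖ ^ 2 + 2 * Dpq * (inner ℝ (k τ) (η τ) : ℝ))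
      = (Real.pi / ω₀ ^ 3) * (Dpp + ω₀ ^ 2 * Dqq) * (a + ω₀ ^ 2 * b) := by
    have : ∀ τ : ℝ,
        Dpp * ‖η τ‖ ^ 2 + Dqq * ‖k τ‖ ^ 2 + 2 * Dpq * (inner ℝ (k τ) (η τ) : ℝ)
        = P * Real.cos (ω₀ * τ) ^ 2 + Q * Real.sin (ω₀ * τ) ^ 2
          + R * (Real.sin (ω₀ * τ) * Real.cos (ω₀ * τ)) := key
    rw [intervalIntegral.integral_congr (fun τ _ => this τ)]
    have i1 : IntervalIntegrable (fun τ => P * Real.cos (ω₀ * τ) ^ 2) volume 0 T :=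
      (Continuous.intervalIntegrable (by fun_prop) _ _)
    have i2 : IntervalIntegrable (fun τ => Q * Real.sin (ω₀ * τ) ^ 2) volume 0 T :=
      (Continuous.intervalIntegrable (by fun_prop) _ _)
    have i3 : IntervalIntegrable
        (fun τ => R * (Real.sin (ω₀ * τ) * Real.cos (ω₀ * τ))) volume 0 T :=
      (Continuous.intervalIntegrable (by fun_prop) _ _)
    rw [intervalIntegral.integral_add (i1.add i2) i3,
      intervalIntegral.integral_add i1 i2,
      intervalIntegral.integral_const_mul, intervalIntegral.integral_const_mul,
      intervalIntegral.integral_const_mul, hIc, hIs, hIsc, hP, hQ]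
    field_simp
    ring
  have hmain := hchar k₀ η₀ T k η hk hη
  rw [hkT, hηT, hint] at hmain
  rw [show -(Real.pi / ω₀ ^ 3 * (Dpp + ω₀ ^ 2 * Dqq) * (a + ω₀ ^ 2 * b))
      = -(Real.pi / ω₀ ^ 3) * (Dpp + ω₀ ^ 2 * Dqq) * (a + ω₀ ^ 2 * b) by ring] at hmain
  refine ⟨hmain, fun hne => ?_⟩
  have hX : 0 < a + ω₀ ^ 2 * b := by
    have hor : k₀ ≠ 0 ∨ η₀ ≠ 0 := by
      by_contra hcon
      push_neg at hcon
      exact hne (by simp [hcon.1, hcon.2, Prod.ext_iff])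
    have hb0 : (0:ℝ) ≤ ω₀ ^ 2 * b := by
      have : (0:ℝ) ≤ b := hb ▸ sq_nonneg _
      positivity
    have ha0 : (0:ℝ) ≤ a := ha ▸ sq_nonneg _
    rcases hor with h | h
    · have : 0 < a := ha ▸ pow_pos (norm_pos_iff.mpr h) 2
      linarith
    · have hbp : 0 < b := hb ▸ pow_pos (norm_pos_iff.mpr h) 2
      have : 0 < ω₀ ^ 2 * b := mul_pos (pow_pos hω₀ 2) hbp
      linarith
  have hexp : Real.exp (-(Real.pi / ω₀ ^ 3) * (Dpp + ω₀ ^ 2 * Dqq)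
      * (a + ω₀ ^ 2 * b)) < 1 := by
    rw [Real.exp_lt_one_iff]
    have h1 : 0 < Real.pi / ω₀ ^ 3 := by positivity
    have h2 : 0 < Dpp + ω₀ ^ 2 * Dqq := by positivity
    have := mul_pos (mul_pos h1 h2) hX
    linarith
  by_contra hw
  have h1 : (1:ℝ) = Real.exp (-(Real.pi / ω₀ ^ 3) * (Dpp + ω₀ ^ 2 * Dqq)
      * (a + ω₀ ^ 2 * b)) :=
    mul_left_cancel₀ hw (by rw [mul_one]; exact hmain)
  linarith
end

section
/- If x exp(-c x) = x for some real x and c > 0 with x representing ŵ(0,η₀) and the relation ŵ(0,η₀) = ŵ(0,η₀)exp(-D_pp|η₀|²s) holds for all s ∈ ℝ and all η₀ ∈ ℝ^d with D_pp > 0, then ŵ(0,η₀) = 0 for all η₀ ≠ 0; hence no nontrivial L¹ steady state of the free (ω₀ = γ = 0) QFP equation exists, since it would require ŵ(0,0) = 1 together with continuity of ŵ at 0. -/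
/-- Free case `ω₀ = γ = 0`: if `ŵ(0,η₀) = ŵ(0,η₀) exp(-D_pp|η₀|² s)` for all
`s ∈ ℝ` and all `η₀`, with `D_pp > 0`, then `ŵ(0,η₀) = 0` for every `η₀ ≠ 0`;
hence a continuous `ŵ` (e.g. the Fourier transform of an L¹ steady state)
cannot satisfy the normalization `ŵ(0,0) = 1`: no nontrivial steady state. -/
theorem stmt_13 (d : ℕ) (hd : 0 < d) (Dpp : ℝ) (hpp : 0 < Dpp)
    (what : EuclideanSpace ℝ (Fin d) × EuclideanSpace ℝ (Fin d) → ℝ)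
    (hrel : ∀ (η₀ : EuclideanSpace ℝ (Fin d)) (s : ℝ),
      what (0, η₀) = what (0, η₀) * Real.exp (-(Dpp * ‖η₀‖ ^ 2 * s))) :
    (∀ η₀ : EuclideanSpace ℝ (Fin d), η₀ ≠ 0 → what (0, η₀) = 0) ∧
      (Continuous what → what 0 ≠ 1) := by
  have hzero : ∀ η₀ : EuclideanSpace ℝ (Fin d), η₀ ≠ 0 → what (0, η₀) = 0 := by
    intro η₀ hη
    have h := hrel η₀ 1
    have hn : 0 < ‖η₀‖ := norm_pos_iff.mpr hη
    have hexp : Real.exp (-(Dpp * ‖η₀‖ ^ 2 * 1)) < 1 := by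
      rw [Real.exp_lt_one_iff]; nlinarith [mul_pos hpp (pow_pos hn 2)]
    by_contra hne
    have heq : Real.exp (-(Dpp * ‖η₀‖ ^ 2 * 1)) = 1 :=
      mul_left_cancel₀ hne (by linarith [h])
    linarith
  refine ⟨hzero, ?_⟩
  intro hcont h1
  set v : EuclideanSpace ℝ (Fin d) := EuclideanSpace.single ⟨0, hd⟩ 1 with hv
  have hvne : v ≠ 0 := by
    intro h
    have := congrFun (congrArg (fun x : EuclideanSpace ℝ (Fin d) => (x : Fin d → ℝ)) h) ⟨0, hd⟩
    simp [hv] at this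
  set f : ℝ → ℝ := fun t => what (0, t • v) with hf'
  have hf : Continuous f := hcont.comp (by continuity)
  have htend : Filter.Tendsto f (nhdsWithin 0 {0}ᶜ) (nhds (f 0)) :=
    (hf.tendsto 0).mono_left nhdsWithin_le_nhds
  have htend0 : Filter.Tendsto f (nhdsWithin 0 {0}ᶜ) (nhds 0) := by
    apply Filter.Tendsto.congr' _ tendsto_const_nhds
    exact Filter.eventually_of_mem self_mem_nhdsWithin
      (fun x hx => (hzero _ (smul_ne_zero hx hvne)).symm)
  have hfz : f 0 = 0 := tendsto_nhds_unique htend htend0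
  have : what 0 = 0 := by
    have : f 0 = what 0 := by simp [hf']; rfl
    linarith [this ▸ hfz]
  rw [this] at h1
  exact one_ne_zero h1.symm
end
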